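/- For any τ > 0, ∫₀^∞ [ (1/2) e^{−(τ+h)/T} − sgn(τ−h)·(1/2) e^{−|τ−h|/T} ] h^{−1} dh is a well-defined (convergent) integral, and as τ → 0⁺ it is asymptotically equivalent to ln(1/τ). -/

import Mathlib

open MeasureTheory Real Filter

open Set Topology
private lemma measurable_realSign : Measurable Real.sign := by
  have : Real.sign = fun r : ℝ => if r < 0 then (-1:ℝ) else if 0 < r then 1 else 0 := by
    funext r; rfl
  rw [this]
  exact Measurable.ite measurableSet_Iio measurable_const
    (Measurable.ite measurableSet_Ioi measurable_const measurable_const)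

private lemma meas_f (T τ : ℝ) : Measurable (fun h : ℝ =>
    ((1/2) * Real.exp (-(τ + h)/T) -
      Real.sign (τ - h) * (1/2) * Real.exp (-|τ - h|/T)) / h) := by
  have hs : Measurable fun h : ℝ => Real.sign (τ - h) :=
    measurable_realSign.comp (measurable_const.sub measurable_id)
  have m1 : Measurable fun h : ℝ => Real.exp (-(τ + h)/T) :=
    (((measurable_const.add measurable_id).neg).div_const T).exp
  have m2 : Measurable fun h : ℝ => Real.exp (-|τ - h|/T) :=
    ((((measurable_const.sub measurable_id).abs).neg).div_const T).exp
  exact ((measurable_const.mul m1).sub ((hs.mul measurable_const).mul m2)).div measurable_id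

private lemma formula_gt (T τ h : ℝ) (hτ : τ < h) :
    ((1/2) * Real.exp (-(τ + h)/T) -
      Real.sign (τ - h) * (1/2) * Real.exp (-|τ - h|/T)) / h
    = Real.cosh (τ/T) * (Real.exp (-h/T) / h) := by
  rw [Real.sign_of_neg (by linarith), abs_of_neg (by linarith : τ - h < 0), Real.cosh_eq]
  have e1 : -(τ + h)/T = -τ/T + -h/T := by ring
  have e2 : -(-(τ - h))/T = τ/T + -h/T := by ring
  rw [e1, e2, Real.exp_add, Real.exp_add]
  have : -τ/T = -(τ/T) := by ring
  rw [this, Real.exp_neg]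
  field_simp
  ring

private lemma formula_lt (T τ h : ℝ) (h1 : 0 < h) (h2 : h < τ) :
    ((1/2) * Real.exp (-(τ + h)/T) -
      Real.sign (τ - h) * (1/2) * Real.exp (-|τ - h|/T))
    = (1/2) * (Real.exp (-(τ + h)/T) - Real.exp (-(τ - h)/T)) := by
  rw [Real.sign_of_pos (by linarith), abs_of_pos (by linarith : 0 < τ - h)]
  ring

private lemma bound_lt (T : ℝ) (hT : 0 < T) (τ h : ℝ) (h1 : 0 < h) (h2 : h < τ) :
    |((1/2) * Real.exp (-(τ + h)/T) -
      Real.sign (τ - h) * (1/2) * Real.exp (-|τ - h|/T)) / h| ≤ 1/T := by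
  rw [formula_lt T τ h h1 h2]
  set a := Real.exp (-(τ + h)/T) with ha
  set b := Real.exp (-(τ - h)/T) with hb
  have hab : a ≤ b := by
    apply Real.exp_le_exp.2
    exact (div_le_div_iff_of_pos_right hT).2 (by linarith)
  have hb1 : b ≤ 1 := by
    apply Real.exp_le_one_iff.2
    apply div_nonpos_of_nonpos_of_nonneg (by linarith) hT.le
  have ha0 : 0 < a := Real.exp_pos _
  have hkey : b - a ≤ 2 * h / T := by
    have hid : a = b * Real.exp (-(2*h/T)) := by
      rw [ha, hb, ← Real.exp_add]; congr 1; field_simp; ring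
    have h3 : 1 - 2*h/T ≤ Real.exp (-(2*h/T)) := by
      have := Real.add_one_le_exp (-(2*h/T)); linarith
    have hb0 : 0 < b := Real.exp_pos _
    nlinarith
  rw [abs_div, abs_of_pos h1, div_le_iff₀ h1]
  have : |(1/2) * (a - b)| = (1/2) * (b - a) := by
    rw [abs_mul, abs_of_pos (by norm_num : (0:ℝ) < 1/2), abs_sub_comm, abs_of_nonneg (by linarith)]
  rw [this]
  have : 2 * h / T = 2 * (h / T) := by ring
  rw [this] at hkey
  have : 1 / T * h = h / T := by ring
  rw [this]
  linarith

private lemma expDiv_integrable (T : ℝ) (hT : 0 < T) (a : ℝ) (ha : 0 < a) :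
    IntegrableOn (fun h : ℝ => Real.exp (-h/T) / h) (Ioi a) := by
  apply Integrable.mono' (g := fun h : ℝ => (1/a) * Real.exp (-(1/T) * h))
  · exact ((exp_neg_integrableOn_Ioi a (by positivity : (0:ℝ) < 1/T)).const_mul (1/a))
  · exact (((measurable_id.neg.div_const T).exp.div measurable_id).aestronglyMeasurable).restrict
  · refine (ae_restrict_iff' measurableSet_Ioi).2 (ae_of_all _ fun h hh => ?_)
    have hh' : a < h := hh
    have h0 : 0 < h := ha.trans hh'
    rw [Real.norm_eq_abs, abs_div, abs_of_pos (Real.exp_pos _), abs_of_pos h0]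
    have e : -(1/T) * h = -h/T := by ring
    rw [e, one_div a, ← div_eq_inv_mul]
    exact div_le_div_of_nonneg_left (Real.exp_pos _).le ha hh'.le

private lemma int_Ioc (T : ℝ) (hT : 0 < T) (τ : ℝ) (hτ : 0 < τ) :
    IntegrableOn (fun h : ℝ =>
      ((1/2) * Real.exp (-(τ + h)/T) -
        Real.sign (τ - h) * (1/2) * Real.exp (-|τ - h|/T)) / h) (Ioc 0 τ) := by
  apply Integrable.mono' (g := fun _ : ℝ => 1/T + 1/τ)
  · exact integrableOn_const measure_Ioc_lt_top.ne
  · exact ((meas_f T τ).aestronglyMeasurable).restrict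
  · refine (ae_restrict_iff' measurableSet_Ioc).2 (ae_of_all _ fun h hh => ?_)
    rcases eq_or_lt_of_le hh.2 with heq | hlt
    · subst heq
      simp only [sub_self, Real.sign_zero, zero_mul, sub_zero, Real.norm_eq_abs]
      have h1 : Real.exp (-(h + h)/T) ≤ 1 :=
        Real.exp_le_one_iff.2 (div_nonpos_of_nonpos_of_nonneg (by linarith [hh.1]) hT.le)
      have h2 : 0 < Real.exp (-(h + h)/T) := Real.exp_pos _
      rw [abs_div, abs_of_pos hh.1, abs_of_pos (by positivity)]
      have step1 : 1/2 * Real.exp (-(h + h)/T) / h ≤ 1 / h :=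
        (div_le_div_iff_of_pos_right hh.1).2 (by nlinarith)
      have : (0:ℝ) ≤ 1/T := by positivity
      linarith
    · have := bound_lt T hT τ h hh.1 hlt
      rw [Real.norm_eq_abs]
      have h3 : (0:ℝ) ≤ 1/τ := by positivity
      linarith

private lemma int_Ioi (T : ℝ) (hT : 0 < T) (τ : ℝ) (hτ : 0 < τ) :
    IntegrableOn (fun h : ℝ =>
      ((1/2) * Real.exp (-(τ + h)/T) -
        Real.sign (τ - h) * (1/2) * Real.exp (-|τ - h|/T)) / h) (Ioi τ) := by
  exact (integrableOn_congr_fun (fun h hh => formula_gt T τ h hh) measurableSet_Ioi).2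
    ((expDiv_integrable T hT τ hτ).const_mul _)

private lemma cont_int (T : ℝ) (hT : 0 < T) (τ : ℝ) (hτ : 0 < τ) (g : ℝ → ℝ)
    (hg : ContinuousOn g (Icc τ 1)) : IntegrableOn g (Ioc τ 1) :=
  (hg.integrableOn_Icc).mono_set Ioc_subset_Icc_self

private lemma cont1 (τ : ℝ) (hτ : 0 < τ) : ContinuousOn (fun h : ℝ => 1/h) (Icc τ 1) :=
  continuousOn_const.div continuousOn_id fun x hx => ne_of_gt (lt_of_lt_of_le hτ hx.1)

private lemma cont2 (T τ : ℝ) (hτ : 0 < τ) :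
    ContinuousOn (fun h : ℝ => (Real.exp (-h/T) - 1) / h) (Icc τ 1) :=
  (((continuousOn_id.neg.div_const T).rexp.sub continuousOn_const)).div continuousOn_id
    fun x hx => ne_of_gt (lt_of_lt_of_le hτ hx.1)

private lemma cont3 (T τ : ℝ) (hτ : 0 < τ) :
    ContinuousOn (fun h : ℝ => Real.exp (-h/T) / h) (Icc τ 1) :=
  ((continuousOn_id.neg.div_const T).rexp).div continuousOn_id
    fun x hx => ne_of_gt (lt_of_lt_of_le hτ hx.1)

private lemma main_eq (T : ℝ) (hT : 0 < T) (τ : ℝ) (hτ0 : 0 < τ) (hτ1 : τ < 1) :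
    (∫ h in Ioi (0:ℝ), ((1/2) * Real.exp (-(τ + h)/T) -
        Real.sign (τ - h) * (1/2) * Real.exp (-|τ - h|/T)) / h)
    = (∫ h in Ioc (0:ℝ) τ, ((1/2) * Real.exp (-(τ + h)/T) -
        Real.sign (τ - h) * (1/2) * Real.exp (-|τ - h|/T)) / h)
      + Real.cosh (τ/T) * (Real.log (1/τ)
        + (∫ h in Ioc τ (1:ℝ), (Real.exp (-h/T) - 1) / h)
        + (∫ h in Ioi (1:ℝ), Real.exp (-h/T) / h)) := by
  have split1 : (∫ h in Ioi (0:ℝ), ((1/2) * Real.exp (-(τ + h)/T) -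
        Real.sign (τ - h) * (1/2) * Real.exp (-|τ - h|/T)) / h)
      = (∫ h in Ioc (0:ℝ) τ, ((1/2) * Real.exp (-(τ + h)/T) -
        Real.sign (τ - h) * (1/2) * Real.exp (-|τ - h|/T)) / h)
        + (∫ h in Ioi τ, ((1/2) * Real.exp (-(τ + h)/T) -
        Real.sign (τ - h) * (1/2) * Real.exp (-|τ - h|/T)) / h) := by
    rw [← Ioc_union_Ioi_eq_Ioi hτ0.le]
    exact setIntegral_union (Ioc_disjoint_Ioi le_rfl) measurableSet_Ioi
      (int_Ioc T hT τ hτ0) (int_Ioi T hT τ hτ0)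
  have step2 : (∫ h in Ioi τ, ((1/2) * Real.exp (-(τ + h)/T) -
        Real.sign (τ - h) * (1/2) * Real.exp (-|τ - h|/T)) / h)
      = Real.cosh (τ/T) * ∫ h in Ioi τ, Real.exp (-h/T) / h := by
    rw [setIntegral_congr_fun measurableSet_Ioi (fun h hh => formula_gt T τ h hh),
      integral_const_mul]
  have split3 : (∫ h in Ioi τ, Real.exp (-h/T) / h)
      = (∫ h in Ioc τ (1:ℝ), Real.exp (-h/T) / h)
        + (∫ h in Ioi (1:ℝ), Real.exp (-h/T) / h) := by
    rw [← Ioc_union_Ioi_eq_Ioi hτ1.le]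
    exact setIntegral_union (Ioc_disjoint_Ioi le_rfl) measurableSet_Ioi
      (cont_int T hT τ hτ0 _ (cont3 T τ hτ0)) (expDiv_integrable T hT 1 one_pos)
  have step4 : (∫ h in Ioc τ (1:ℝ), Real.exp (-h/T) / h)
      = Real.log (1/τ) + (∫ h in Ioc τ (1:ℝ), (Real.exp (-h/T) - 1) / h) := by
    have e1 : (∫ h in Ioc τ (1:ℝ), Real.exp (-h/T) / h)
        = ∫ h in Ioc τ (1:ℝ), (1/h + (Real.exp (-h/T) - 1) / h) := by
      refine setIntegral_congr_fun measurableSet_Ioc (fun h hh => ?_)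
      have h0 : h ≠ 0 := ne_of_gt (hτ0.trans hh.1)
      field_simp
      ring
    have e2 : (∫ h in Ioc τ (1:ℝ), (1/h : ℝ)) = Real.log (1/τ) := by
      rw [← intervalIntegral.integral_of_le hτ1.le, integral_one_div]
      rw [Set.uIcc_of_le hτ1.le]
      rintro ⟨h1, -⟩
      linarith
    rw [e1, integral_add (cont_int T hT τ hτ0 _ (cont1 τ hτ0))
      (cont_int T hT τ hτ0 _ (cont2 T τ hτ0)), e2]
  rw [split1, step2, split3, step4]

private lemma boundA (T : ℝ) (hT : 0 < T) (τ : ℝ) (hτ0 : 0 < τ) (hτ1 : τ < 1) :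
    |∫ h in Ioc (0:ℝ) τ, ((1/2) * Real.exp (-(τ + h)/T) -
        Real.sign (τ - h) * (1/2) * Real.exp (-|τ - h|/T)) / h| ≤ 1/T := by
  rw [integral_Ioc_eq_integral_Ioo]
  have key : ‖∫ h in Ioo (0:ℝ) τ, ((1/2) * Real.exp (-(τ + h)/T) -
      Real.sign (τ - h) * (1/2) * Real.exp (-|τ - h|/T)) / h‖
      ≤ (1/T) * (volume (Ioo (0:ℝ) τ)).toReal := by
    apply norm_setIntegral_le_of_norm_le_const measure_Ioo_lt_top
    · intro h hh
      rw [Real.norm_eq_abs]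
      exact bound_lt T hT τ h hh.1 hh.2
  rw [Real.volume_Ioo] at key
  rw [← Real.norm_eq_abs]
  refine key.trans ?_
  rw [ENNReal.toReal_ofReal (by linarith)]
  nlinarith [le_of_eq (rfl : (1:ℝ)/T = 1/T), (by positivity : (0:ℝ) < 1/T)]

private lemma boundG (T : ℝ) (hT : 0 < T) (τ : ℝ) (hτ0 : 0 < τ) (hτ1 : τ < 1) :
    |∫ h in Ioc τ (1:ℝ), (Real.exp (-h/T) - 1) / h| ≤ 1/T := by
  have key : ‖∫ h in Ioc τ (1:ℝ), (Real.exp (-h/T) - 1) / h‖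
      ≤ (1/T) * (volume (Ioc τ (1:ℝ))).toReal := by
    apply norm_setIntegral_le_of_norm_le_const measure_Ioc_lt_top
    · intro h hh
      have h0 : 0 < h := hτ0.trans hh.1
      have hle : Real.exp (-h/T) ≤ 1 :=
        Real.exp_le_one_iff.2 (div_nonpos_of_nonpos_of_nonneg (by linarith) hT.le)
      have hge : 1 - h/T ≤ Real.exp (-h/T) := by
        have h5 := Real.add_one_le_exp (-h/T)
        have h6 : -h/T + 1 = 1 - h/T := by ring
        rw [h6] at h5; exact h5
      rw [Real.norm_eq_abs, abs_div, abs_of_pos h0, div_le_iff₀ h0]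
      rw [abs_sub_comm, abs_of_nonneg (by linarith)]
      have : 1/T * h = h/T := by ring
      linarith
  rw [Real.volume_Ioc] at key
  rw [← Real.norm_eq_abs]
  refine key.trans ?_
  rw [ENNReal.toReal_ofReal (by linarith)]
  nlinarith [(by positivity : (0:ℝ) < 1/T)]

theorem covariance_H0_log_divergence (T : ℝ) (hT : 0 < T) :
    (∀ τ : ℝ, 0 < τ → IntegrableOn
        (fun h : ℝ => ((1/2) * Real.exp (-(τ + h)/T) -
          Real.sign (τ - h) * (1/2) * Real.exp (-|τ - h|/T)) / h) (Set.Ioi 0)) ∧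
      Tendsto (fun τ : ℝ =>
          (∫ h in Set.Ioi (0:ℝ), ((1/2) * Real.exp (-(τ + h)/T) -
            Real.sign (τ - h) * (1/2) * Real.exp (-|τ - h|/T)) / h) / Real.log (1/τ))
        (nhdsWithin 0 (Set.Ioi 0)) (nhds 1) := by
  constructor
  · intro τ hτ
    rw [← Ioc_union_Ioi_eq_Ioi hτ.le]
    exact (int_Ioc T hT τ hτ).union (int_Ioi T hT τ hτ)
  · set L : ℝ → ℝ := fun τ => Real.log (1/τ) with hLdef
    have hL : Tendsto L (𝓝[>] (0:ℝ)) atTop := by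
      have h1 : Tendsto Real.log (𝓝[>] (0:ℝ)) atBot := Real.tendsto_log_nhdsGT_zero
      have h2 := tendsto_neg_atBot_atTop.comp h1
      refine h2.congr fun τ => ?_
      simp [hLdef, Function.comp, one_div, Real.log_inv]
    set C : ℝ := ∫ h in Ioi (1:ℝ), Real.exp (-h/T) / h with hCdef
    set A : ℝ → ℝ := fun τ => ∫ h in Ioc (0:ℝ) τ, ((1/2) * Real.exp (-(τ + h)/T) -
        Real.sign (τ - h) * (1/2) * Real.exp (-|τ - h|/T)) / h with hAdef
    set G : ℝ → ℝ := fun τ => ∫ h in Ioc τ (1:ℝ), (Real.exp (-h/T) - 1) / h with hGdef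
    have hmem : ∀ᶠ τ in 𝓝[>] (0:ℝ), τ ∈ Ioo (0:ℝ) 1 :=
      eventually_of_mem (Ioo_mem_nhdsGT_of_mem ⟨le_rfl, one_pos⟩) fun τ h => h
    have hLpos : ∀ᶠ τ in 𝓝[>] (0:ℝ), 0 < L τ := hL.eventually (eventually_gt_atTop 0)
    have key : ∀ F : ℝ → ℝ, ∀ M : ℝ, (∀ᶠ τ in 𝓝[>] (0:ℝ), |F τ| ≤ M) →
        Tendsto (fun τ => F τ / L τ) (𝓝[>] (0:ℝ)) (𝓝 0) := by
      intro F M hF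
      apply squeeze_zero_norm' (a := fun τ => M / L τ)
      · filter_upwards [hF, hLpos] with τ h1 h2
        rw [Real.norm_eq_abs, abs_div, abs_of_pos h2]
        exact (div_le_div_iff_of_pos_right h2).2 h1
      · exact Tendsto.div_atTop tendsto_const_nhds hL
    have hA : Tendsto (fun τ => A τ / L τ) (𝓝[>] (0:ℝ)) (𝓝 0) := by
      refine key A (1/T) ?_
      filter_upwards [hmem] with τ h
      exact boundA T hT τ h.1 h.2
    have hGC : Tendsto (fun τ => (G τ + C) / L τ) (𝓝[>] (0:ℝ)) (𝓝 0) := by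
      refine key _ (1/T + |C|) ?_
      filter_upwards [hmem] with τ h
      calc |G τ + C| ≤ |G τ| + |C| := abs_add_le _ _
        _ ≤ 1/T + |C| := by have := boundG T hT τ h.1 h.2; linarith
    have hcosh : Tendsto (fun τ : ℝ => Real.cosh (τ/T)) (𝓝[>] (0:ℝ)) (𝓝 1) := by
      have hc : Continuous fun τ : ℝ => Real.cosh (τ/T) :=
        Real.continuous_cosh.comp (continuous_id.div_const T)
      have h2 := hc.tendsto 0
      rw [zero_div, Real.cosh_zero] at h2
      exact h2.mono_left nhdsWithin_le_nhds
    have final : Tendsto (fun τ => A τ / L τ + Real.cosh (τ/T) * (1 + (G τ + C) / L τ))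
        (𝓝[>] (0:ℝ)) (𝓝 (0 + 1 * (1 + 0))) :=
      hA.add (hcosh.mul (tendsto_const_nhds.add hGC))
    norm_num at final
    refine Tendsto.congr' ?_ final
    filter_upwards [hmem, hLpos] with τ hm hLp
    have hLne : L τ ≠ 0 := ne_of_gt hLp
    have := main_eq T hT τ hm.1 hm.2
    rw [this]
    simp only [hLdef, hAdef, hGdef, hCdef]
    have hLne' : Real.log (1/τ) ≠ 0 := hLne
    field_simp
    ring
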